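/- Let A be an n×M real matrix, let 1 ≤ p, p' ≤ ∞ with 1/p + 1/p' = 1, let Q^M := [−1,1]^M ⊆ ℝ^M be the unit hypercube, and define R_p(A) := inf_{z ∈ ℝⁿ, z ≠ 0} ‖Aᵀz‖₁/‖z‖_{p'}. Then for every r ≥ 0, the closed ℓ_p-ball {v ∈ ℝⁿ : ‖v‖_p ≤ r} is contained in the image A·Q^M := {A·d : d ∈ Q^M} if and only if r ≤ R_p(A). In particular, R_p(A) is the radius of the largest ℓ_p-ball included in A·Q^M. -/

import Mathlib

open Matrix Finset
open scoped ENNReal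

noncomputable section

/-- The ℓ_p norm of a finitely indexed real vector, `1 ≤ p ≤ ∞`. -/
def lpNorm (p : ℝ≥0∞) [Fact (1 ≤ p)] {ι : Type*} [Fintype ι] (v : ι → ℝ) : ℝ :=
  ‖(WithLp.equiv p (∀ _ : ι, ℝ)).symm v‖

section Helpers

variable {ι : Type*} [Fintype ι] {p q : ℝ≥0∞} [Fact (1 ≤ p)] [Fact (1 ≤ q)]

lemma lpNorm_nonneg (v : ι → ℝ) : 0 ≤ lpNorm p v := norm_nonneg _

lemma lpNorm_eq_sum (hp : p ≠ ∞) (v : ι → ℝ) :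
    lpNorm p v = (∑ i, |v i| ^ p.toReal) ^ (1 / p.toReal) := by
  have h1 : (1 : ℝ≥0∞) ≤ p := Fact.out
  have hp0 : 0 < p.toReal := ENNReal.toReal_pos (by positivity) hp
  rw [lpNorm, PiLp.norm_eq_sum hp0]
  rfl

lemma lpNorm_one_eq (v : ι → ℝ) : lpNorm 1 v = ∑ i, |v i| := by
  rw [lpNorm_eq_sum (by simp)]; simp

lemma lpNorm_top_eq (v : ι → ℝ) : lpNorm ∞ v = ⨆ i, |v i| := by
  rw [lpNorm, PiLp.norm_eq_ciSup]; rfl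

lemma abs_le_csup (z : ι → ℝ) (i : ι) : |z i| ≤ ⨆ j, |z j| :=
  le_ciSup (f := fun j => |z j|) (Set.Finite.bddAbove (Set.finite_range _)) i

lemma lpNorm_pos {v : ι → ℝ} (hz : v ≠ 0) : 0 < lpNorm p v := by
  rw [lpNorm, norm_pos_iff]
  intro h
  exact hz (by simpa using congrArg (WithLp.equiv p (∀ _ : ι, ℝ)) h)

lemma lpNorm_smul (c : ℝ) (v : ι → ℝ) : lpNorm p (c • v) = |c| * lpNorm p v := by
  have : (WithLp.equiv p (∀ _ : ι, ℝ)).symm (c • v)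
      = c • (WithLp.equiv p (∀ _ : ι, ℝ)).symm v := rfl
  rw [lpNorm, this, norm_smul, Real.norm_eq_abs, lpNorm]

lemma conj_cases {p q : ℝ≥0∞} (hpq : p.HolderConjugate q) :
    (p = 1 ∧ q = ∞) ∨ (q = 1 ∧ p = ∞) ∨
      (p ≠ ∞ ∧ q ≠ ∞ ∧ p.toReal.HolderConjugate q.toReal) := by
  have h := ENNReal.holderConjugate_iff.mp hpq
  rcases eq_or_ne p 1 with rfl | hp1
  · left; refine ⟨rfl, ?_⟩
    simp only [inv_one] at h
    have hq : q⁻¹ = 0 :=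
      (ENNReal.add_right_inj (a := (1:ℝ≥0∞)) (b := q⁻¹) (c := 0) (by simp)).mp
        (by simpa using h)
    simpa using hq
  rcases eq_or_ne q 1 with rfl | hq1
  · right; left; refine ⟨rfl, ?_⟩
    have h' := ENNReal.holderConjugate_iff.mp (ENNReal.HolderConjugate.symm (hpq := hpq))
    simp only [inv_one] at h'
    have hp : p⁻¹ = 0 :=
      (ENNReal.add_right_inj (a := (1:ℝ≥0∞)) (b := p⁻¹) (c := 0) (by simp)).mp
        (by simpa using h')
    simpa using hp
  right; right
  have hpt : p ≠ ∞ := by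
    rintro rfl
    simp only [ENNReal.inv_top, zero_add] at h
    exact hq1 (by simpa using congrArg (·⁻¹) h)
  have hqt : q ≠ ∞ := by
    rintro rfl
    simp only [ENNReal.inv_top, add_zero] at h
    exact hp1 (by simpa using congrArg (·⁻¹) h)
  have hp0 : p ≠ 0 := ENNReal.HolderConjugate.ne_zero p q
  have hq0 : q ≠ 0 := ENNReal.HolderConjugate.ne_zero q p
  refine ⟨hpt, hqt, Real.holderConjugate_iff.mpr ⟨?_, ?_⟩⟩
  · have : 1 < p := lt_of_le_of_ne (ENNReal.HolderConjugate.one_le p q) (Ne.symm hp1)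
    have := (ENNReal.toReal_lt_toReal (by simp) hpt).mpr this
    simpa using this
  · have := congrArg ENNReal.toReal h
    rwa [ENNReal.toReal_add (by simp [hp0]) (by simp [hq0]), ENNReal.toReal_inv,
      ENNReal.toReal_inv, ENNReal.toReal_one] at this

/-- Hölder's inequality for `lpNorm`. -/
lemma lpNorm_holder (hpq : p.HolderConjugate q) (z v : ι → ℝ) :
    ∑ i, z i * v i ≤ lpNorm q z * lpNorm p v := by
  rcases conj_cases hpq with ⟨rfl, rfl⟩ | ⟨rfl, rfl⟩ | ⟨hpt, hqt, hreal⟩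
  · rw [lpNorm_one_eq, lpNorm_top_eq]
    calc ∑ i, z i * v i ≤ ∑ i, (⨆ j, |z j|) * |v i| := by
          refine Finset.sum_le_sum fun i _ => ?_
          calc z i * v i ≤ |z i * v i| := le_abs_self _
            _ = |z i| * |v i| := abs_mul _ _
            _ ≤ (⨆ j, |z j|) * |v i| :=
                mul_le_mul_of_nonneg_right (abs_le_csup z i) (abs_nonneg _)
      _ = (⨆ j, |z j|) * ∑ i, |v i| := by rw [Finset.mul_sum]
  · rw [lpNorm_one_eq, lpNorm_top_eq]
    calc ∑ i, z i * v i ≤ ∑ i, |z i| * ⨆ j, |v j| := by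
          refine Finset.sum_le_sum fun i _ => ?_
          calc z i * v i ≤ |z i * v i| := le_abs_self _
            _ = |z i| * |v i| := abs_mul _ _
            _ ≤ |z i| * ⨆ j, |v j| :=
                mul_le_mul_of_nonneg_left (abs_le_csup v i) (abs_nonneg _)
      _ = (∑ i, |z i|) * ⨆ j, |v j| := by rw [Finset.sum_mul]
  · rw [lpNorm_eq_sum hpt, lpNorm_eq_sum hqt]
    exact Real.inner_le_Lp_mul_Lq Finset.univ z v hreal.symm

/-- The dual norm is attained (up to sign conventions): there is `v` in the unit
`ℓ_p` ball with `⟨z, v⟩ = ‖z‖_q`. -/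
lemma dual_vector [Nonempty ι] (hpq : p.HolderConjugate q) (z : ι → ℝ) :
    ∃ v : ι → ℝ, lpNorm p v ≤ 1 ∧ ∑ i, z i * v i = lpNorm q z := by
  classical
  rcases conj_cases hpq with ⟨rfl, rfl⟩ | ⟨rfl, rfl⟩ | ⟨hpt, hqt, hreal⟩
  · -- p = 1, q = ∞
    obtain ⟨i₀, -, hmax⟩ := Finset.exists_max_image Finset.univ (fun i => |z i|)
      Finset.univ_nonempty
    refine ⟨fun i => if i = i₀ then (if 0 ≤ z i₀ then 1 else -1) else 0, ?_, ?_⟩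
    · rw [lpNorm_one_eq]
      have : ∀ i, |if i = i₀ then (if 0 ≤ z i₀ then (1:ℝ) else -1) else 0|
          = if i = i₀ then 1 else 0 := by
        intro i; split_ifs <;> simp
      simp only [this, Finset.sum_ite_eq' Finset.univ i₀ (fun _ => (1:ℝ)),
        Finset.mem_univ, if_pos]
      exact le_refl 1
    · rw [lpNorm_top_eq]
      have hsum : ∑ i, z i * (if i = i₀ then (if 0 ≤ z i₀ then (1:ℝ) else -1) else 0)
          = |z i₀| := by
        rw [Finset.sum_eq_single i₀]
        · rw [if_pos rfl]
          by_cases h : 0 ≤ z i₀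
          · rw [if_pos h, mul_one, abs_of_nonneg h]
          · rw [if_neg h, mul_neg_one, abs_of_neg (not_le.mp h)]
        · intro b _ hb; simp [hb]
        · intro h; exact absurd (Finset.mem_univ i₀) h
      rw [hsum]
      exact le_antisymm (abs_le_csup z i₀) (ciSup_le fun i => hmax i (Finset.mem_univ i))
  · -- q = 1, p = ∞
    refine ⟨fun i => if 0 ≤ z i then 1 else -1, ?_, ?_⟩
    · rw [lpNorm_top_eq]
      refine ciSup_le fun i => ?_
      by_cases h : 0 ≤ z i <;> simp [h]
    · rw [lpNorm_one_eq]
      refine Finset.sum_congr rfl fun i _ => ?_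
      show z i * (if 0 ≤ z i then (1:ℝ) else -1) = |z i|
      by_cases h : 0 ≤ z i
      · rw [if_pos h, mul_one, abs_of_nonneg h]
      · rw [if_neg h, mul_neg_one, abs_of_neg (not_le.mp h)]
  · -- 1 < p, q < ∞
    have hreal' := hreal
    rcases eq_or_ne z 0 with rfl | hz
    · refine ⟨0, ?_, ?_⟩
      · rw [lpNorm_eq_sum hpt]
        simp only [Pi.zero_apply, abs_zero, Real.zero_rpow hreal.ne_zero,
          Finset.sum_const_zero, Real.zero_rpow (one_div_ne_zero hreal.ne_zero)]
        exact zero_le_one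
      · rw [lpNorm_eq_sum hqt]
        simp only [Pi.zero_apply, abs_zero, mul_zero, Finset.sum_const_zero,
          Real.zero_rpow hreal.symm.ne_zero,
          Real.zero_rpow (one_div_ne_zero hreal.symm.ne_zero)]
    · have hC : 0 < lpNorm q z := lpNorm_pos hz
      set C := lpNorm q z with hCdef
      set q' := q.toReal with hq'def
      set p' := p.toReal with hp'def
      have hS : ∑ i, |z i| ^ q' = C ^ q' := by
        rw [hCdef, lpNorm_eq_sum hqt, ← hq'def, ← Real.rpow_mul (by positivity), one_div,
          inv_mul_cancel₀ hreal.symm.ne_zero, Real.rpow_one]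
      refine ⟨fun i => (if 0 ≤ z i then 1 else -1) * |z i| ^ (q' - 1) / C ^ (q' - 1), ?_, ?_⟩
      · rw [lpNorm_eq_sum hpt, ← hp'def]
        have habs : ∀ i, |(if 0 ≤ z i then (1:ℝ) else -1) * |z i| ^ (q' - 1) / C ^ (q' - 1)| ^ p'
            = |z i| ^ q' / C ^ q' := by
          intro i
          have h1 : |(if 0 ≤ z i then (1:ℝ) else -1) * |z i| ^ (q' - 1) / C ^ (q' - 1)|
              = |z i| ^ (q' - 1) / C ^ (q' - 1) := by
            rw [abs_div, abs_mul]
            have : |if 0 ≤ z i then (1:ℝ) else -1| = 1 := by split_ifs <;> simp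
            rw [this, one_mul, abs_of_nonneg (Real.rpow_nonneg (abs_nonneg _) _),
              abs_of_nonneg (Real.rpow_nonneg hC.le _)]
          rw [h1, Real.div_rpow (Real.rpow_nonneg (abs_nonneg _) _) (Real.rpow_nonneg hC.le _),
            ← Real.rpow_mul (abs_nonneg _), ← Real.rpow_mul hC.le,
            hreal.symm.sub_one_mul_conj]
        simp only [habs]
        rw [← Finset.sum_div, hS, div_self (by positivity), Real.one_rpow]
      · have hterm : ∀ i, z i * ((if 0 ≤ z i then (1:ℝ) else -1) * |z i| ^ (q' - 1) / C ^ (q' - 1))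
            = |z i| ^ q' / C ^ (q' - 1) := by
          intro i
          have h1 : z i * (if 0 ≤ z i then (1:ℝ) else -1) = |z i| := by
            split_ifs with h
            · rw [mul_one, abs_of_nonneg h]
            · rw [mul_neg_one, abs_of_neg (not_le.mp h)]
          have h2 : |z i| * |z i| ^ (q' - 1) = |z i| ^ q' := by
            rcases eq_or_ne (z i) 0 with h0 | h0
            · rw [h0, abs_zero, Real.zero_rpow hreal.symm.ne_zero, zero_mul]
            · have hpos : 0 < |z i| := abs_pos.mpr h0
              calc |z i| * |z i| ^ (q' - 1) = |z i| ^ (1:ℝ) * |z i| ^ (q' - 1) := by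
                    rw [Real.rpow_one]
                _ = |z i| ^ (1 + (q' - 1)) := (Real.rpow_add hpos 1 (q' - 1)).symm
                _ = |z i| ^ q' := by ring_nf
          calc z i * ((if 0 ≤ z i then (1:ℝ) else -1) * |z i| ^ (q' - 1) / C ^ (q' - 1))
              = (z i * (if 0 ≤ z i then (1:ℝ) else -1)) * |z i| ^ (q' - 1) / C ^ (q' - 1) := by
                ring
            _ = |z i| ^ q' / C ^ (q' - 1) := by rw [h1, h2]
        simp only [hterm]
        rw [← Finset.sum_div, hS, ← Real.rpow_sub hC, sub_sub_cancel, Real.rpow_one]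

/-- Pairing identity: `⟨A d, z⟩ = ⟨d, Aᵀ z⟩`. -/
lemma pairing_eq {n M : ℕ} (A : Matrix (Fin n) (Fin M) ℝ) (d : Fin M → ℝ) (z : Fin n → ℝ) :
    ∑ i, A.mulVec d i * z i = ∑ j, Aᵀ.mulVec z j * d j := by
  simp only [Matrix.mulVec, dotProduct, Finset.sum_mul, Matrix.transpose_apply]
  rw [Finset.sum_comm]
  exact Finset.sum_congr rfl fun j _ => Finset.sum_congr rfl fun i _ => by ring

end Helpers

/-- **Lemma (inscribed ball radius).** For an `n×M` matrix `A` and conjugate exponents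
`p, p'`, the closed `ℓ_p`-ball of radius `r ≥ 0` is contained in the image `A·Q^M` of
the unit hypercube `Q^M = [−1,1]^M` if and only if
`r ≤ R_p(A) := inf_{z≠0} ‖Aᵀz‖₁/‖z‖_{p'}`; i.e. `R_p(A)` is the radius of the largest
`ℓ_p`-ball included in `A·Q^M`. -/
theorem stmt11 {n M : ℕ} (hn : 0 < n) (A : Matrix (Fin n) (Fin M) ℝ)
    (p p' : ℝ≥0∞) [Fact (1 ≤ p)] [Fact (1 ≤ p')] (hconj : 1 / p + 1 / p' = 1)
    (r : ℝ) (hr : 0 ≤ r) :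
    {v : Fin n → ℝ | lpNorm p v ≤ r} ⊆
        (fun d => A.mulVec d) '' {d : Fin M → ℝ | ∀ j, |d j| ≤ 1} ↔
      r ≤ ⨅ z : {z : Fin n → ℝ // z ≠ 0},
        (∑ j, |Aᵀ.mulVec z.1 j|) / lpNorm p' z.1 := by
  classical
  haveI : Nonempty (Fin n) := ⟨⟨0, hn⟩⟩
  have hpq : p.HolderConjugate p' := ENNReal.holderConjugate_iff.mpr (by simpa [one_div] using hconj)
  haveI hne : Nonempty {z : Fin n → ℝ // z ≠ 0} :=
    ⟨⟨Pi.single ⟨0, hn⟩ 1, fun h => by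
      have := congrFun h ⟨0, hn⟩
      simp [Pi.single_apply] at this⟩⟩
  set Q : Set (Fin M → ℝ) := {d : Fin M → ℝ | ∀ j, |d j| ≤ 1} with hQdef
  constructor
  · -- inclusion → r ≤ inf
    intro hincl
    refine le_ciInf fun z => ?_
    obtain ⟨zv, hz⟩ := z
    have hzpos : 0 < lpNorm p' zv := lpNorm_pos hz
    rw [le_div_iff₀ hzpos]
    obtain ⟨v, hv1, hv2⟩ := dual_vector hpq zv
    have hrv : lpNorm p (r • v) ≤ r := by
      rw [lpNorm_smul, abs_of_nonneg hr]
      calc r * lpNorm p v ≤ r * 1 := mul_le_mul_of_nonneg_left hv1 hr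
        _ = r := mul_one r
    obtain ⟨d, hdQ, hd⟩ := hincl hrv
    have hd' : A.mulVec d = r • v := hd
    have key : ∑ j, Aᵀ.mulVec zv j * d j = r * lpNorm p' zv := by
      rw [← pairing_eq, hd']
      calc ∑ i, (r • v) i * zv i = r * ∑ i, zv i * v i := by
            rw [Finset.mul_sum]; exact Finset.sum_congr rfl fun i _ => by
              simp only [Pi.smul_apply, smul_eq_mul]; ring
        _ = r * lpNorm p' zv := by rw [hv2]
    rw [← key]
    refine Finset.sum_le_sum fun j _ => ?_
    calc Aᵀ.mulVec zv j * d j ≤ |Aᵀ.mulVec zv j * d j| := le_abs_self _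
      _ = |Aᵀ.mulVec zv j| * |d j| := abs_mul _ _
      _ ≤ |Aᵀ.mulVec zv j| * 1 := mul_le_mul_of_nonneg_left (hdQ j) (abs_nonneg _)
      _ = |Aᵀ.mulVec zv j| := mul_one _
  · -- r ≤ inf → inclusion
    intro hinf v hv
    simp only [Set.mem_setOf_eq] at hv
    by_contra hvS
    -- the image set is convex and closed
    have hQ_eq : Q = Set.pi Set.univ (fun _ : Fin M => Set.Icc (-1:ℝ) 1) := by
      ext d
      simp only [hQdef, Set.mem_setOf_eq, Set.mem_pi, Set.mem_univ, true_implies,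
        Set.mem_Icc, abs_le]
    have hQconv : Convex ℝ Q := by
      rw [hQ_eq]; exact convex_pi fun _ _ => convex_Icc _ _
    have hQcomp : IsCompact Q := by
      rw [hQ_eq]; exact isCompact_univ_pi fun _ => isCompact_Icc
    have himg_eq : (fun d => A.mulVec d) '' Q = ⇑A.mulVecLin '' Q := by
      rfl
    have hSconv : Convex ℝ ((fun d => A.mulVec d) '' Q) := by
      rw [himg_eq]; exact hQconv.linear_image A.mulVecLin
    have hScl : IsClosed ((fun d => A.mulVec d) '' Q) := by
      rw [himg_eq]
      exact (hQcomp.image A.mulVecLin.continuous_of_finiteDimensional).isClosed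
    obtain ⟨f, u, hfu, huv⟩ := geometric_hahn_banach_closed_point hSconv hScl hvS
    set z : Fin n → ℝ := fun i => f (Pi.single i 1) with hzdef
    have hfrep : ∀ w : Fin n → ℝ, f w = ∑ i, w i * z i := by
      intro w
      have hw : ∑ i, Pi.single i (w i) = w := Finset.univ_sum_single w
      have hsingle : ∀ i, (Pi.single i (w i) : Fin n → ℝ)
          = w i • (Pi.single i 1 : Fin n → ℝ) := by
        intro i
        ext j
        rcases eq_or_ne j i with rfl | hij
        · simp
        · simp [Pi.single_apply, hij]
      calc f w = f (∑ i, Pi.single i (w i)) := by rw [hw]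
        _ = ∑ i, f (Pi.single i (w i)) := map_sum f _ _
        _ = ∑ i, w i * z i := by
            refine Finset.sum_congr rfl fun i _ => ?_
            rw [hsingle i, f.map_smul, smul_eq_mul]
    -- z ≠ 0
    have hz0 : z ≠ 0 := by
      intro h
      have h0S : (0 : Fin n → ℝ) ∈ (fun d => A.mulVec d) '' Q := by
        refine ⟨0, fun j => by simp, ?_⟩
        simp [Matrix.mulVec_zero]
      have hf0 : f 0 = 0 := map_zero f
      have h1 := hfu 0 h0S
      have h2 : f v = ∑ i, v i * z i := hfrep v
      have h3 : f v = 0 := by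
        rw [h2]; simp [h]
      rw [hf0] at h1
      linarith [huv]
    -- the maximizer of f over the image
    set d₀ : Fin M → ℝ := fun j => if 0 ≤ Aᵀ.mulVec z j then 1 else -1 with hd₀def
    have hd₀Q : d₀ ∈ Q := by
      intro j
      by_cases h : 0 ≤ Aᵀ.mulVec z j <;> simp [hd₀def, h]
    have hfmax : f (A.mulVec d₀) = ∑ j, |Aᵀ.mulVec z j| := by
      rw [hfrep, pairing_eq]
      refine Finset.sum_congr rfl fun j _ => ?_
      by_cases h : 0 ≤ Aᵀ.mulVec z j
      · rw [hd₀def]; simp only [if_pos h, mul_one]; exact (abs_of_nonneg h).symm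
      · rw [hd₀def]; simp only [if_neg h, mul_neg_one]
        exact (abs_of_neg (not_le.mp h)).symm
    -- the chain of inequalities
    have hzpos : 0 < lpNorm p' z := lpNorm_pos hz0
    have hinfz : r * lpNorm p' z ≤ ∑ j, |Aᵀ.mulVec z j| := by
      have hbdd : BddBelow (Set.range fun z : {z : Fin n → ℝ // z ≠ 0} =>
          (∑ j, |Aᵀ.mulVec z.1 j|) / lpNorm p' z.1) := by
        refine ⟨0, ?_⟩
        rintro x ⟨w, rfl⟩
        exact div_nonneg (Finset.sum_nonneg fun j _ => abs_nonneg _) (lpNorm_nonneg _)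
      have := hinf.trans (ciInf_le hbdd ⟨z, hz0⟩)
      rwa [le_div_iff₀ hzpos] at this
    have hHolder : f v ≤ lpNorm p' z * lpNorm p v := by
      rw [hfrep]
      calc ∑ i, v i * z i = ∑ i, z i * v i :=
            Finset.sum_congr rfl fun i _ => mul_comm _ _
        _ ≤ lpNorm p' z * lpNorm p v := lpNorm_holder hpq z v
    have hchain : f v ≤ f (A.mulVec d₀) := by
      calc f v ≤ lpNorm p' z * lpNorm p v := hHolder
        _ ≤ lpNorm p' z * r := mul_le_mul_of_nonneg_left hv hzpos.le
        _ = r * lpNorm p' z := mul_comm _ _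
        _ ≤ ∑ j, |Aᵀ.mulVec z j| := hinfz
        _ = f (A.mulVec d₀) := hfmax.symm
    have : f (A.mulVec d₀) < u := hfu _ ⟨d₀, hd₀Q, rfl⟩
    linarith [huv]
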